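/- arXiv:1508.06961 — 2 statements merged into one kernel-verified Lean document; each statement's English description precedes it below -/
import Mathlib

section
/- Let G(p) be a formation in ℝᵈ (d ≥ 2, n ≥ 2) with at least one edge. Then Null(R_B) = span{𝟏⊗I_d, p} if and only if G(p) is uniquely determined up to a translation and a scaling factor by its inter-neighbor bearings; precisely, if and only if every configuration p' = (p'_1,…,p'_n) with p'_i ≠ p'_j for all (i,j) ∈ E and P_{g_ij}(p'_j − p'_i) = 0 for all (i,j) ∈ E is of the form p' = c • p + (v,…,v) for some nonzero scalar c ∈ ℝ and some v ∈ ℝᵈ. -/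
open scoped InnerProductSpace

/-- The orthogonal projection matrix `P_x = I − x xᵀ/‖x‖²` onto the orthogonal
complement of a nonzero vector `x ∈ ℝᵈ`, as a linear map. -/
noncomputable def projP {d : ℕ} (x : EuclideanSpace ℝ (Fin d)) :
    EuclideanSpace ℝ (Fin d) →ₗ[ℝ] EuclideanSpace ℝ (Fin d) :=
  LinearMap.id - (‖x‖ ^ 2)⁻¹ • ((innerSL ℝ x).toLinearMap.smulRight x)

/-- The linear map sending a configuration `x = (x_1, …, x_n)` to `x_j − x_i`. -/
noncomputable def relpos {d n : ℕ} (i j : Fin n) :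
    (Fin n → EuclideanSpace ℝ (Fin d)) →ₗ[ℝ] EuclideanSpace ℝ (Fin d) :=
  LinearMap.proj (R := ℝ) (φ := fun _ : Fin n => EuclideanSpace ℝ (Fin d)) j -
    LinearMap.proj (R := ℝ) (φ := fun _ : Fin n => EuclideanSpace ℝ (Fin d)) i

/-- The bearing `g_ij = (p_j − p_i)/‖p_j − p_i‖` of edge `(i, j)`. -/
noncomputable def bearing {d n : ℕ} (p : Fin n → EuclideanSpace ℝ (Fin d))
    (i j : Fin n) : EuclideanSpace ℝ (Fin d) :=
  ‖p j - p i‖⁻¹ • (p j - p i)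

/-- The bearing rigidity matrix `R_B` of the formation `G(p)`: the linear map
`ℝ^{dn} → ℝ^{d|E|}` whose component for edge `(i,j) ∈ E` is
`(1/‖e_ij‖) P_{g_ij} (x_j − x_i)`. -/
noncomputable def RB {d n : ℕ} (E : Finset (Fin n × Fin n))
    (p : Fin n → EuclideanSpace ℝ (Fin d)) :
    (Fin n → EuclideanSpace ℝ (Fin d)) →ₗ[ℝ] (↥E → EuclideanSpace ℝ (Fin d)) :=
  LinearMap.pi fun e =>
    ‖p e.1.2 - p e.1.1‖⁻¹ • (projP (bearing p e.1.1 e.1.2) ∘ₗ relpos e.1.1 e.1.2)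

/-- The bearing Laplacian `L_B` of the formation `G(p)`: the linear map
`ℝ^{dn} → ℝ^{dn}` whose `i`-th `ℝᵈ`-block is `∑_{j : (i,j) ∈ E} P_{g_ij}(x_i − x_j)`. -/
noncomputable def LB {d n : ℕ} (E : Finset (Fin n × Fin n))
    (p : Fin n → EuclideanSpace ℝ (Fin d)) :
    (Fin n → EuclideanSpace ℝ (Fin d)) →ₗ[ℝ] (Fin n → EuclideanSpace ℝ (Fin d)) :=
  LinearMap.pi fun i =>
    ∑ j ∈ Finset.univ.filter (fun j => (i, j) ∈ E),
      (projP (bearing p i j) ∘ₗ relpos j i)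

/-- The subspace `span{𝟏 ⊗ I_d, p} = {c • p + (v, …, v) : c ∈ ℝ, v ∈ ℝᵈ}` of
translations and scalings of the configuration `p`. -/
def transScale {d n : ℕ} (p : Fin n → EuclideanSpace ℝ (Fin d)) :
    Set (Fin n → EuclideanSpace ℝ (Fin d)) :=
  {x | ∃ (c : ℝ) (v : EuclideanSpace ℝ (Fin d)), x = c • p + fun _ => v}

lemma projP_smul_self {d : ℕ} (x : EuclideanSpace ℝ (Fin d)) (hx : x ≠ 0) (a : ℝ) :
    projP x (a • x) = 0 := by
  have h : ‖x‖ ≠ 0 := norm_ne_zero_iff.mpr hx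
  simp only [projP, LinearMap.sub_apply, LinearMap.id_apply, LinearMap.smul_apply,
    ContinuousLinearMap.coe_coe, LinearMap.smulRight_apply, innerSL_apply_apply,
    real_inner_smul_right, real_inner_self_eq_norm_sq, smul_smul]
  rw [sub_eq_zero]
  congr 1
  field_simp

lemma projP_bearing_sub {d n : ℕ} (p : Fin n → EuclideanSpace ℝ (Fin d)) (i j : Fin n)
    (h : p i ≠ p j) : projP (bearing p i j) (p j - p i) = 0 := by
  have he : p j - p i ≠ 0 := sub_ne_zero.mpr h.symm
  have hn : ‖p j - p i‖ ≠ 0 := norm_ne_zero_iff.mpr he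
  have hb : bearing p i j ≠ 0 := smul_ne_zero (inv_ne_zero hn) he
  have : p j - p i = ‖p j - p i‖ • bearing p i j := by
    rw [bearing, smul_inv_smul₀ hn]
  rw [this]
  exact projP_smul_self _ hb _

lemma mem_ker_RB_iff {d n : ℕ} (E : Finset (Fin n × Fin n))
    (p : Fin n → EuclideanSpace ℝ (Fin d)) (hsep : ∀ e ∈ E, p e.1 ≠ p e.2)
    (x : Fin n → EuclideanSpace ℝ (Fin d)) :
    x ∈ LinearMap.ker (RB E p) ↔
      ∀ e ∈ E, projP (bearing p e.1 e.2) (x e.2 - x e.1) = 0 := by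
  rw [LinearMap.mem_ker, funext_iff]
  constructor
  · intro h e he
    have h2 := h ⟨e, he⟩
    have hn : ‖p e.2 - p e.1‖⁻¹ ≠ 0 :=
      inv_ne_zero (norm_ne_zero_iff.mpr (sub_ne_zero.mpr (hsep e he).symm))
    simpa [RB, relpos, LinearMap.pi_apply, smul_eq_zero, hn] using h2
  · intro h e
    obtain ⟨e, he⟩ := e
    simp [RB, relpos, LinearMap.pi_apply, h e he]

/-- `Null(R_B) = span{𝟏 ⊗ I_d, p}` if and only if `G(p)` is uniquely determined by
its inter-neighbor bearings up to translation and scaling: every configuration `p'`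
with `p'_i ≠ p'_j` and `P_{g_ij}(p'_j − p'_i) = 0` for all edges `(i,j)` is of the
form `p' = c • p + (v, …, v)` with `c ≠ 0`. -/
theorem stmt7 {d n : ℕ} (hd : 2 ≤ d) (hn : 2 ≤ n)
    (E : Finset (Fin n × Fin n)) (hE : E.Nonempty)
    (p : Fin n → EuclideanSpace ℝ (Fin d))
    (hloop : ∀ e ∈ E, e.1 ≠ e.2) (hsep : ∀ e ∈ E, p e.1 ≠ p e.2) :
    (LinearMap.ker (RB E p) : Set (Fin n → EuclideanSpace ℝ (Fin d))) = transScale p ↔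
      ∀ p' : Fin n → EuclideanSpace ℝ (Fin d),
        (∀ e ∈ E, p' e.1 ≠ p' e.2) →
        (∀ e ∈ E, projP (bearing p e.1 e.2) (p' e.2 - p' e.1) = 0) →
        ∃ (c : ℝ) (v : EuclideanSpace ℝ (Fin d)), c ≠ 0 ∧ p' = c • p + fun _ => v := by
  -- transScale ⊆ ker always
  have hsub : transScale p ⊆ (LinearMap.ker (RB E p) : Set _) := by
    rintro x ⟨c, v, rfl⟩
    rw [SetLike.mem_coe, mem_ker_RB_iff E p hsep]
    intro e he
    have : ((c • p + fun _ => v) : Fin n → EuclideanSpace ℝ (Fin d)) e.2 -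
        ((c • p + fun _ => v) : Fin n → EuclideanSpace ℝ (Fin d)) e.1 = c • (p e.2 - p e.1) := by
      simp only [Pi.add_apply, Pi.smul_apply, smul_sub]
      abel
    rw [this, map_smul]
    rw [projP_bearing_sub p e.1 e.2 (hsep e he)]
    simp
  constructor
  · intro hker p' hne hproj
    have hmem : p' ∈ transScale p := by
      rw [← hker, SetLike.mem_coe, mem_ker_RB_iff E p hsep]
      exact hproj
    obtain ⟨c, v, rfl⟩ := hmem
    refine ⟨c, v, ?_, rfl⟩
    rintro rfl
    obtain ⟨e, he⟩ := hE
    exact hne e he (by simp)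
  · intro h
    apply Set.Subset.antisymm _ hsub
    intro x hx
    rw [SetLike.mem_coe, mem_ker_RB_iff E p hsep] at hx
    -- choose t avoiding bad values
    set bad : Finset ℝ :=
      insert 0 (E.image fun e => -(inner ℝ (x e.2 - x e.1) (p e.2 - p e.1) : ℝ)
        / ‖x e.2 - x e.1‖ ^ 2) with hbad
    obtain ⟨t, ht⟩ := Infinite.exists_notMem_finset bad
    have ht0 : t ≠ 0 := fun h0 => ht (h0 ▸ Finset.mem_insert_self 0 _)
    have hgood : ∀ e ∈ E, (p e.2 - p e.1) + t • (x e.2 - x e.1) ≠ 0 := by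
      intro e he hzero
      have hΔx : x e.2 - x e.1 ≠ 0 := by
        intro hx0
        rw [hx0, smul_zero, add_zero] at hzero
        exact (sub_ne_zero.mpr (hsep e he).symm) hzero
      have htx : t • (x e.2 - x e.1) = -(p e.2 - p e.1) := by
        rw [eq_neg_iff_add_eq_zero]; linear_combination (norm := module) hzero
      have : t = -(inner ℝ (x e.2 - x e.1) (p e.2 - p e.1) : ℝ) / ‖x e.2 - x e.1‖ ^ 2 := by
        have h1 : (inner ℝ (x e.2 - x e.1) (t • (x e.2 - x e.1)) : ℝ)
            = -(inner ℝ (x e.2 - x e.1) (p e.2 - p e.1) : ℝ) := by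
          rw [htx, inner_neg_right]
        rw [real_inner_smul_right, real_inner_self_eq_norm_sq] at h1
        have hΔn : ‖x e.2 - x e.1‖ ^ 2 ≠ 0 := pow_ne_zero _ (norm_ne_zero_iff.mpr hΔx)
        rw [eq_div_iff hΔn]
        linear_combination h1
      exact ht (Finset.mem_insert_of_mem (Finset.mem_image.mpr ⟨e, he, this.symm⟩))
    set p' := p + t • x with hp'
    have hne' : ∀ e ∈ E, p' e.1 ≠ p' e.2 := by
      intro e he heq
      apply hgood e he
      have : p' e.2 - p' e.1 = (p e.2 - p e.1) + t • (x e.2 - x e.1) := by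
        simp [hp', smul_sub]; abel
      rw [← this, sub_eq_zero]
      exact heq.symm
    have hproj' : ∀ e ∈ E, projP (bearing p e.1 e.2) (p' e.2 - p' e.1) = 0 := by
      intro e he
      have : p' e.2 - p' e.1 = (p e.2 - p e.1) + t • (x e.2 - x e.1) := by
        simp [hp', smul_sub]; abel
      rw [this, map_add, map_smul, projP_bearing_sub p e.1 e.2 (hsep e he), hx e he]
      simp
    obtain ⟨c, v, hc, heq⟩ := h p' hne' hproj'
    refine ⟨t⁻¹ * (c - 1), t⁻¹ • v, ?_⟩
    funext i
    have hi : p i + t • x i = c • p i + v := by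
      have := congrFun heq i
      simpa [hp'] using this
    have : t • x i = (c - 1) • p i + v := by
      rw [sub_smul, one_smul]
      linear_combination (norm := module) hi
    rw [Pi.add_apply, Pi.smul_apply, ← inv_smul_smul₀ ht0 (x i), this, smul_add, smul_smul]
end

section
/- Consider the directed formation in ℝ² with four agents at p_1 = (−1,1), p_2 = (1,1), p_3 = (1,−1), p_4 = (−1,−1) and directed edge set E = {(1,4), (2,1), (2,3), (2,4), (3,4)}. Then the vector x = (x_1, x_2, x_3, x_4) with x_1 = (0,2), x_2 = (−1,1), x_3 = (−2,0), x_4 = (0,0) satisfies L_B x = 0 but R_B x ≠ 0; hence Null(R_B) ⊊ Null(L_B) and this formation is not bearing persistent. -/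
open scoped InnerProductSpace

/-- The four agents of the unit-square formation:
`p_1 = (−1,1)`, `p_2 = (1,1)`, `p_3 = (1,−1)`, `p_4 = (−1,−1)`. -/
noncomputable def pSquare : Fin 4 → EuclideanSpace ℝ (Fin 2) := fun i =>
  (WithLp.equiv 2 (Fin 2 → ℝ)).symm (![![-1, 1], ![1, 1], ![1, -1], ![-1, -1]] i)

/-- The directed edge set `{(1,4), (2,1), (2,3), (2,4), (3,4)}` (with agents
indexed `1,…,4` as `0,…,3`). -/
def Enp : Finset (Fin 4 × Fin 4) := {(0, 3), (1, 0), (1, 2), (1, 3), (2, 3)}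

/-- The vector `x` with `x_1 = (0,2)`, `x_2 = (−1,1)`, `x_3 = (−2,0)`, `x_4 = (0,0)`. -/
noncomputable def xWitness : Fin 4 → EuclideanSpace ℝ (Fin 2) := fun i =>
  (WithLp.equiv 2 (Fin 2 → ℝ)).symm (![![0, 2], ![-1, 1], ![-2, 0], ![0, 0]] i)


section AuxStmt15

lemma projP_apply' {d : ℕ} (x v : EuclideanSpace ℝ (Fin d)) :
    projP x v = v - ((‖x‖ ^ 2)⁻¹ * ⟪x, v⟫_ℝ) • x := by
  simp [projP, smul_smul]

lemma projP_smul' {d : ℕ} (c : ℝ) (hc : c ≠ 0) (x : EuclideanSpace ℝ (Fin d)) :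
    projP (c • x) = projP x := by
  rcases eq_or_ne x 0 with rfl | hx
  · simp
  · have hn : ‖x‖ ≠ 0 := norm_ne_zero_iff.mpr hx
    refine LinearMap.ext fun v => ?_
    rw [projP_apply', projP_apply']
    have : ((‖c • x‖ ^ 2)⁻¹ * ⟪c • x, v⟫_ℝ) • (c • x)
        = ((‖x‖ ^ 2)⁻¹ * ⟪x, v⟫_ℝ) • x := by
      rw [smul_smul, norm_smul, real_inner_smul_left, mul_pow, Real.norm_eq_abs, sq_abs]
      congr 1
      field_simp
    rw [this]

lemma projP_bearing {d n : ℕ} (p : Fin n → EuclideanSpace ℝ (Fin d)) (i j : Fin n)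
    (h : p j ≠ p i) : projP (bearing p i j) = projP (p j - p i) := by
  have : p j - p i ≠ 0 := sub_ne_zero.mpr h
  exact projP_smul' _ (inv_ne_zero (norm_ne_zero_iff.mpr this)) _

lemma relpos_apply {d n : ℕ} (i j : Fin n) (x : Fin n → EuclideanSpace ℝ (Fin d)) :
    relpos i j x = x j - x i := rfl

lemma inner2 (x y : EuclideanSpace ℝ (Fin 2)) :
    ⟪x, y⟫_ℝ = x 0 * y 0 + x 1 * y 1 := by
  simp [PiLp.inner_apply, Fin.sum_univ_two, mul_comm]

lemma normsq2 (x : EuclideanSpace ℝ (Fin 2)) : ‖x‖ ^ 2 = x 0 ^ 2 + x 1 ^ 2 := by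
  rw [← real_inner_self_eq_norm_sq, inner2]; ring

lemma pS00 : pSquare 0 0 = -1 := rfl
lemma pS01 : pSquare 0 1 = 1 := rfl
lemma pS10 : pSquare 1 0 = 1 := rfl
lemma pS11 : pSquare 1 1 = 1 := rfl
lemma pS20 : pSquare 2 0 = 1 := rfl
lemma pS21 : pSquare 2 1 = -1 := rfl
lemma pS30 : pSquare 3 0 = -1 := rfl
lemma pS31 : pSquare 3 1 = -1 := rfl
lemma xW00 : xWitness 0 0 = 0 := rfl
lemma xW01 : xWitness 0 1 = 2 := rfl
lemma xW10 : xWitness 1 0 = -1 := rfl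
lemma xW11 : xWitness 1 1 = 1 := rfl
lemma xW20 : xWitness 2 0 = -2 := rfl
lemma xW21 : xWitness 2 1 = 0 := rfl
lemma xW30 : xWitness 3 0 = 0 := rfl
lemma xW31 : xWitness 3 1 = 0 := rfl


lemma pS_ne {i j : Fin 4} (h : (i, j) ∈ Enp) : pSquare j ≠ pSquare i := by
  fin_cases h <;> intro hc
  · exact absurd (congrArg (fun v => v 1) hc) (by rw [pS31, pS01]; norm_num)
  · exact absurd (congrArg (fun v => v 0) hc) (by rw [pS00, pS10]; norm_num)
  · exact absurd (congrArg (fun v => v 1) hc) (by rw [pS21, pS11]; norm_num)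
  · exact absurd (congrArg (fun v => v 0) hc) (by rw [pS30, pS10]; norm_num)
  · exact absurd (congrArg (fun v => v 0) hc) (by rw [pS30, pS20]; norm_num)

end AuxStmt15

/-- The square formation with directed edges `{(1,4),(2,1),(2,3),(2,4),(3,4)}` is
not bearing persistent: `x` satisfies `L_B x = 0` but `R_B x ≠ 0`, hence
`Null(R_B) ⊊ Null(L_B)`. -/
theorem stmt15 :
    LB Enp pSquare xWitness = 0 ∧ RB Enp pSquare xWitness ≠ 0 ∧
      LinearMap.ker (RB Enp pSquare) < LinearMap.ker (LB Enp pSquare) := by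
  have hLB : LB Enp pSquare xWitness = 0 := by
    funext i
    fin_cases i
    · show (LB Enp pSquare) xWitness 0 = 0
      simp only [LB, LinearMap.pi_apply]
      rw [show Finset.univ.filter (fun j => ((0 : Fin 4), j) ∈ Enp) = {3} by decide]
      rw [Finset.sum_singleton, LinearMap.comp_apply, relpos_apply,
        projP_bearing _ _ _ (pS_ne (by decide)), projP_apply', normsq2, inner2]
      ext k
      fin_cases k <;>
        simp [PiLp.sub_apply, PiLp.smul_apply, pS00, pS01, pS30, pS31,
          xW00, xW01, xW30, xW31] <;> norm_num
    · show (LB Enp pSquare) xWitness 1 = 0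
      simp only [LB, LinearMap.pi_apply]
      rw [show Finset.univ.filter (fun j => ((1 : Fin 4), j) ∈ Enp)
            = {0, 2, 3} by decide]
      rw [Finset.sum_insert (by decide), Finset.sum_insert (by decide),
        Finset.sum_singleton]
      simp only [LinearMap.add_apply, LinearMap.comp_apply, relpos_apply]
      rw [projP_bearing _ _ _ (pS_ne (by decide)),
        projP_bearing _ _ _ (pS_ne (by decide)),
        projP_bearing _ _ _ (pS_ne (by decide))]
      simp only [projP_apply', normsq2, inner2]
      ext k
      fin_cases k <;>
        simp [PiLp.sub_apply, PiLp.smul_apply, PiLp.add_apply, pS00, pS01, pS10,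
          pS11, pS20, pS21, pS30, pS31, xW00, xW01, xW10, xW11, xW20, xW21,
          xW30, xW31] <;> norm_num
    · show (LB Enp pSquare) xWitness 2 = 0
      simp only [LB, LinearMap.pi_apply]
      rw [show Finset.univ.filter (fun j => ((2 : Fin 4), j) ∈ Enp) = {3} by decide]
      rw [Finset.sum_singleton, LinearMap.comp_apply, relpos_apply,
        projP_bearing _ _ _ (pS_ne (by decide)), projP_apply', normsq2, inner2]
      ext k
      fin_cases k <;>
        simp [PiLp.sub_apply, PiLp.smul_apply, pS20, pS21, pS30, pS31,
          xW20, xW21, xW30, xW31] <;> norm_num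
    · show (LB Enp pSquare) xWitness 3 = 0
      simp only [LB, LinearMap.pi_apply]
      rw [show Finset.univ.filter (fun j => ((3 : Fin 4), j) ∈ Enp) = ∅ by decide]
      rw [Finset.sum_empty]
      rfl
  have hRB : RB Enp pSquare xWitness ≠ 0 := by
    intro h
    have h1 : RB Enp pSquare xWitness ⟨((1 : Fin 4), (0 : Fin 4)), by decide⟩ = 0 := by
      rw [h]; rfl
    simp only [RB, LinearMap.pi_apply, LinearMap.smul_apply] at h1
    have hne : pSquare (0 : Fin 4) ≠ pSquare 1 := pS_ne (by decide)
    have hn0 : ‖pSquare (0 : Fin 4) - pSquare 1‖ ≠ 0 :=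
      norm_ne_zero_iff.mpr (sub_ne_zero.mpr hne)
    rw [smul_eq_zero] at h1
    rcases h1 with h1 | h1
    · exact inv_ne_zero hn0 h1
    · rw [LinearMap.comp_apply, relpos_apply,
        projP_bearing _ _ _ hne, projP_apply', normsq2, inner2] at h1
      have h2 := congrArg (fun v => v 1) h1
      norm_num [PiLp.sub_apply, PiLp.smul_apply, pS00, pS01, pS10, pS11,
        xW00, xW01, xW10, xW11] at h2
  have hle : LinearMap.ker (RB Enp pSquare) ≤ LinearMap.ker (LB Enp pSquare) := by
    intro y hy
    have hy0 : RB Enp pSquare y = 0 := LinearMap.mem_ker.mp hy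
    have key : ∀ i j : Fin 4, (i, j) ∈ Enp →
        projP (bearing pSquare i j) (y j - y i) = 0 := by
      intro i j hij
      have := congrFun hy0 ⟨(i, j), hij⟩
      simp only [RB, LinearMap.pi_apply, LinearMap.smul_apply, Pi.zero_apply] at this
      have hne : pSquare j ≠ pSquare i := pS_ne hij
      have hn0 : ‖pSquare j - pSquare i‖ ≠ 0 :=
        norm_ne_zero_iff.mpr (sub_ne_zero.mpr hne)
      rw [smul_eq_zero] at this
      rcases this with h1 | h1
      · exact absurd h1 (inv_ne_zero hn0)
      · rwa [LinearMap.comp_apply, relpos_apply] at h1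
    rw [LinearMap.mem_ker]
    funext i
    show (LB Enp pSquare) y i = 0
    simp only [LB, LinearMap.pi_apply]
    rw [LinearMap.sum_apply]
    refine Finset.sum_eq_zero fun j hj => ?_
    have hij : (i, j) ∈ Enp := (Finset.mem_filter.mp hj).2
    rw [LinearMap.comp_apply, relpos_apply]
    rw [← neg_sub (y j) (y i), map_neg, key i j hij, neg_zero]
  refine ⟨hLB, hRB, ?_⟩
  rw [SetLike.lt_iff_le_and_exists]
  exact ⟨hle, xWitness, LinearMap.mem_ker.mpr hLB,
    fun hx => hRB (LinearMap.mem_ker.mp hx)⟩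
end
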